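/- Under the assumptions F c = 1_J and M(ξ) = FᵀU F invertible, the D-criterion satisfies log det(M_Q) = log det(M) − log(1 + b·1_Jᵀ U 1_J), where M_Q = (M⁻¹ + b c cᵀ)⁻¹ and b ≥ 0. -/

import Mathlib

open Matrix Finset

/-- Under `F c = 1_J` and `M = FᵀUF` invertible, the `D`-criterion satisfies
`log det M_Q = log det M − log(1 + b 1ᵀ U 1)`, where `M_Q = (M⁻¹ + b c cᵀ)⁻¹`. -/
theorem d_criterion_intercept {J p : ℕ} (F : Matrix (Fin J) (Fin p) ℝ)
    (u : Fin J → ℝ) (c : Fin p → ℝ) (b : ℝ)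
    (hu : ∀ j, 0 < u j) (hb : 0 ≤ b)
    (hFc : F *ᵥ c = fun _ => (1 : ℝ))
    (hM : IsUnit (Fᵀ * Matrix.diagonal u * F).det) :
    letI M : Matrix (Fin p) (Fin p) ℝ := Fᵀ * Matrix.diagonal u * F
    letI one : Fin J → ℝ := fun _ => (1 : ℝ)
    Real.log ((M⁻¹ + b • vecMulVec c c)⁻¹).det
      = Real.log M.det - Real.log (1 + b * (one ⬝ᵥ (Matrix.diagonal u *ᵥ one))) := by
  set M : Matrix (Fin p) (Fin p) ℝ := Fᵀ * Matrix.diagonal u * F with hMdef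
  set one : Fin J → ℝ := fun _ => (1 : ℝ) with honedef
  have hs : (0:ℝ) ≤ one ⬝ᵥ (Matrix.diagonal u *ᵥ one) := by
    simp only [dotProduct, mulVec_diagonal, honedef, one_mul, mul_one]
    exact Finset.sum_nonneg fun j _ => (hu j).le
  have h1bs : (0:ℝ) < 1 + b * (one ⬝ᵥ (Matrix.diagonal u *ᵥ one)) := by positivity
  -- cᵀ M c = 1ᵀ U 1
  have hcMc : c ⬝ᵥ (M *ᵥ c) = one ⬝ᵥ (Matrix.diagonal u *ᵥ one) := by
    rw [hMdef, Matrix.mul_assoc, ← Matrix.mulVec_mulVec, ← Matrix.mulVec_mulVec,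
      dotProduct_mulVec, vecMul_transpose, hFc]
  -- determinant lemma
  have hdet : (M⁻¹ + b • vecMulVec c c).det
      = M.det⁻¹ * (1 + b * (one ⬝ᵥ (Matrix.diagonal u *ᵥ one))) := by
    have : b • vecMulVec c c = Matrix.replicateCol (Fin 1) (b • c) * Matrix.replicateRow (Fin 1) c := by
      refine Eq.trans ?_ (vecMulVec_eq (Fin 1) (b • c) c)
      ext i j
      simp [vecMulVec, mul_assoc]
    rw [this, det_add_mul _ _ (by simpa using hM.inv), Matrix.nonsing_inv_nonsing_inv _ hM,
      Matrix.det_nonsing_inv, Ring.inverse_eq_inv]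
    congr 1
    rw [Matrix.det_fin_one, Matrix.mul_assoc, ← Matrix.replicateCol_mulVec, Matrix.add_apply,
      Matrix.one_apply_eq, Matrix.replicateRow_mul_replicateCol_apply, Matrix.mulVec_smul, dotProduct_smul,
      smul_eq_mul, hcMc]
  have hMd : M.det ≠ 0 := hM.ne_zero
  have hdet0 : (M⁻¹ + b • vecMulVec c c).det ≠ 0 := by
    rw [hdet]; exact mul_ne_zero (inv_ne_zero hMd) h1bs.ne'
  rw [Matrix.det_nonsing_inv, Ring.inverse_eq_inv, hdet, mul_inv, inv_inv,
    Real.log_mul hMd (inv_ne_zero h1bs.ne'), Real.log_inv, ← sub_eq_add_neg]
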